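/- Let G be a graph, C a longest cycle of G with a fixed orientation, H a component of G − C, and v1, v2 two distinct vertices on C each having a neighbor in H. Then there is no path of G with both endpoints on C, internal vertices off C, joining v1⁻ and v2⁻; in particular v1⁻v2⁻ is not an edge of G, and similarly v1⁺v2⁺ is not an edge of G. -/

import Mathlib

open SimpleGraph

variable {V : Type*} [Fintype V] [DecidableEq V]

/-- `p 0, p 1, ..., p (n-1)` is a path of order `n` in `G`. -/
def IsPathOn (G : SimpleGraph V) (n : ℕ) (p : ℕ → V) : Prop :=
  (∀ i j, i < n → j < n → p i = p j → i = j) ∧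
  (∀ i, i + 1 < n → G.Adj (p i) (p (i + 1)))

/-- An induced path of order `n` in `G`. -/
def IsInducedPathOn (G : SimpleGraph V) (n : ℕ) (p : ℕ → V) : Prop :=
  IsPathOn G n p ∧ ∀ i j, i < n → j < n → G.Adj (p i) (p j) → (i + 1 = j ∨ j + 1 = i)

/-- `G` contains no induced path on 5 vertices. -/
def P5Free (G : SimpleGraph V) : Prop := ¬ ∃ p : ℕ → V, IsInducedPathOn G 5 p

/-- `G` contains no induced `K₄` minus an edge. -/
def K4mFree (G : SimpleGraph V) : Prop :=
  ¬ ∃ a b c d : V, a ≠ b ∧ a ≠ c ∧ a ≠ d ∧ b ≠ c ∧ b ≠ d ∧ c ≠ d ∧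
    G.Adj a b ∧ G.Adj a c ∧ G.Adj a d ∧ G.Adj b c ∧ G.Adj b d ∧ ¬ G.Adj c d

/-- `G` contains no induced `W*` (two triangles `abc`, `def` joined by the edge `cd`). -/
def WStarFree (G : SimpleGraph V) : Prop :=
  ¬ ∃ a b c d e f : V, List.Nodup [a, b, c, d, e, f] ∧
    G.Adj a b ∧ G.Adj b c ∧ G.Adj a c ∧ G.Adj d e ∧ G.Adj e f ∧ G.Adj d f ∧ G.Adj c d ∧
    ¬ G.Adj a d ∧ ¬ G.Adj a e ∧ ¬ G.Adj a f ∧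
    ¬ G.Adj b d ∧ ¬ G.Adj b e ∧ ¬ G.Adj b f ∧ ¬ G.Adj c e ∧ ¬ G.Adj c f

/-- `G` contains no induced paw (triangle `abc` with pendant edge `cd`). -/
def Z1Free (G : SimpleGraph V) : Prop :=
  ¬ ∃ a b c d : V, List.Nodup [a, b, c, d] ∧
    G.Adj a b ∧ G.Adj b c ∧ G.Adj a c ∧ G.Adj c d ∧ ¬ G.Adj a d ∧ ¬ G.Adj b d

/-- An (oriented) cycle of length `n` in `G`, as an injective map `ZMod n → V`
with consecutive vertices adjacent. -/
def IsCycleOn (G : SimpleGraph V) (n : ℕ) (c : ZMod n → V) : Prop :=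
  3 ≤ n ∧ Function.Injective c ∧ ∀ i, G.Adj (c i) (c (i + 1))

/-- A longest cycle of `G`. -/
def IsLongestCycle (G : SimpleGraph V) (n : ℕ) (c : ZMod n → V) : Prop :=
  IsCycleOn G n c ∧ ∀ (m : ℕ) (d : ZMod m → V), IsCycleOn G m d → m ≤ n

/-- A dominating cycle: every edge of `G` is incident with a vertex of the cycle. -/
def DominatingCycle (G : SimpleGraph V) (n : ℕ) (c : ZMod n → V) : Prop :=
  IsCycleOn G n c ∧ ∀ u v : V, G.Adj u v → u ∈ Set.range c ∨ v ∈ Set.range c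

/-- `H` is (the vertex set of) a connected component of `G - R`. -/
def IsCompOff (G : SimpleGraph V) (R : Set V) (H : Set V) : Prop :=
  H.Nonempty ∧ Disjoint H R ∧ (G.induce H).Connected ∧
  ∀ u v : V, u ∈ H → v ∉ H → v ∉ R → ¬ G.Adj u v

/-- `μ`: the maximum order of a component of `G - R`. -/
noncomputable def muC (G : SimpleGraph V) (R : Set V) : ℕ :=
  sSup {k | ∃ H : Set V, IsCompOff G R H ∧ H.ncard = k}

/-- `ω`: the number of components of `G - R` of maximum order. -/
noncomputable def omegaC (G : SimpleGraph V) (R : Set V) : ℕ :=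
  {H : Set V | IsCompOff G R H ∧ H.ncard = muC G R}.ncard

/-- `G` is 2-connected: at least 3 vertices, connected, and removing any
vertex leaves it connected. -/
def TwoConnected (G : SimpleGraph V) : Prop :=
  3 ≤ Fintype.card V ∧ G.Connected ∧
  ∀ v : V, (G.induce ({v}ᶜ : Set V)).Connected

/-- The set of indices of `ZMod n` encountered going from `s` to `t` in the
positive direction (including both `s` and `t`). -/
def seg (n : ℕ) (s t : ZMod n) : Set (ZMod n) :=
  {x | ∃ k : ℕ, x = s + (k : ZMod n) ∧ ∀ m : ℕ, m < k → s + (m : ZMod n) ≠ t}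

/-- `G` is complete multipartite: the vertices partition into classes of an
equivalence relation which are independent, with all edges between classes. -/
def CompleteMultipartite (G : SimpleGraph V) : Prop :=
  ∃ r : V → V → Prop, Equivalence r ∧ ∀ u v : V, u ≠ v → (G.Adj u v ↔ ¬ r u v)

/-- A `C`-path (for `R = V(C)`): a path of order at least 2 whose ends lie in
`R` and whose internal vertices avoid `R`. -/
def IsCPath (G : SimpleGraph V) (R : Set V) (m : ℕ) (p : ℕ → V) : Prop :=
  2 ≤ m ∧ IsPathOn G m p ∧ p 0 ∈ R ∧ p (m - 1) ∈ R ∧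
  ∀ i, 0 < i → i < m - 1 → p i ∉ R

set_option linter.unusedSectionVars false

section Aux

/-- list `f 0, ..., f (t-1)` -/
private def rmap (f : ℕ → V) (t : ℕ) : List V := (List.range t).map f

private lemma rmap_length (f : ℕ → V) (t : ℕ) : (rmap f t).length = t := by
  simp [rmap]

private lemma mem_rmap {f : ℕ → V} {t : ℕ} {x : V} :
    x ∈ rmap f t ↔ ∃ k, k < t ∧ f k = x := by
  simp [rmap, List.mem_map]

private lemma rmap_ne_nil {f : ℕ → V} {t : ℕ} (ht : 0 < t) : rmap f t ≠ [] := by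
  intro h
  have := rmap_length f t
  rw [h] at this
  simp at this; omega

private lemma rmap_head? {f : ℕ → V} {t : ℕ} (ht : 0 < t) :
    (rmap f t).head? = some (f 0) := by
  rw [List.head?_eq_head (rmap_ne_nil ht), List.head_eq_getElem]
  simp [rmap]

private lemma rmap_getLast? {f : ℕ → V} {t : ℕ} (ht : 0 < t) :
    (rmap f t).getLast? = some (f (t - 1)) := by
  rw [List.getLast?_eq_getLast_of_ne_nil (rmap_ne_nil ht), List.getLast_eq_getElem]
  simp [rmap]

private lemma rmap_nodup {f : ℕ → V} {t : ℕ}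
    (hf : ∀ k l, k < t → l < t → f k = f l → k = l) : (rmap f t).Nodup := by
  refine List.Nodup.map_on ?_ (List.nodup_range (n := t))
  intro k hk l hl h
  exact hf k l (List.mem_range.mp hk) (List.mem_range.mp hl) h

private lemma rmap_chain' {G : SimpleGraph V} {f : ℕ → V} {t : ℕ}
    (hf : ∀ k, k + 1 < t → G.Adj (f k) (f (k + 1))) :
    (rmap f t).Chain' G.Adj := by
  rw [List.Chain', List.isChain_iff_getElem]
  intro i h
  simp only [rmap, List.length_map, List.length_range] at h
  simp only [rmap, List.get_eq_getElem, List.getElem_map, List.getElem_range]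
  exact hf i (by omega)

/-- Extract a path list in `G` inside `H` from connectivity of the induced graph. -/
private lemma pathList (G : SimpleGraph V) {H : Set V} (hconn : (G.induce H).Connected)
    {a b : V} (ha : a ∈ H) (hb : b ∈ H) :
    ∃ L : List V, L ≠ [] ∧ L.Nodup ∧ L.Chain' G.Adj ∧
      L.head? = some a ∧ L.getLast? = some b ∧ ∀ x ∈ L, x ∈ H := by
  obtain ⟨w⟩ := hconn.preconnected ⟨a, ha⟩ ⟨b, hb⟩
  let P := w.toPath
  refine ⟨P.1.support.map Subtype.val, ?_, ?_, ?_, ?_, ?_, ?_⟩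
  · intro h
    exact P.1.support_ne_nil (List.map_eq_nil_iff.mp h)
  · exact (P.2.support_nodup).map Subtype.val_injective
  · exact List.isChain_map_of_isChain Subtype.val (fun x y h => h) P.1.isChain_adj_support
  · rw [List.head?_eq_head (by intro h; exact P.1.support_ne_nil (List.map_eq_nil_iff.mp h))]
    congr 1
    rw [List.head_map, Walk.head_support]
  · rw [List.getLast?_eq_getLast_of_ne_nil
      (by intro h; exact P.1.support_ne_nil (List.map_eq_nil_iff.mp h))]
    congr 1
    rw [List.getLast_map, Walk.getLast_support]
  · intro x hx
    obtain ⟨⟨y, hy⟩, _, rfl⟩ := List.mem_map.mp hx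
    exact hy

/-- Any suitable list gives a cycle, so its length is at most `n`. -/
private lemma cycle_bound {G : SimpleGraph V} {n : ℕ} {c : ZMod n → V}
    (hc : IsLongestCycle G n c)
    (L : List V) (h3 : 3 ≤ L.length) (hnd : L.Nodup) (hch : L.Chain' G.Adj)
    {x y : V} (hh : L.head? = some x) (hl : L.getLast? = some y) (hadj : G.Adj y x) :
    L.length ≤ n := by
  haveI : NeZero L.length := ⟨by omega⟩
  haveI : Fact (1 < L.length) := ⟨by omega⟩
  have hne : L ≠ [] := by intro h; rw [h] at h3; simp at h3
  have hx : x = L.head hne := by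
    rw [List.head?_eq_head hne] at hh; exact (Option.some_injective _ hh).symm
  have hy : y = L.getLast hne := by
    rw [List.getLast?_eq_getLast_of_ne_nil hne] at hl
    exact (Option.some_injective _ hl).symm
  refine hc.2 L.length (fun i => L[i.val]'(ZMod.val_lt i)) ⟨h3, ?_, ?_⟩
  · intro i j hij
    simp only at hij
    have h2 : (⟨i.val, ZMod.val_lt i⟩ : Fin L.length) = ⟨j.val, ZMod.val_lt j⟩ :=
      List.nodup_iff_injective_getElem.mp hnd hij
    have : i.val = j.val := by simpa using h2
    exact ZMod.val_injective _ this
  · intro i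
    show G.Adj (L[i.val]'(ZMod.val_lt i)) (L[(i + 1).val]'(ZMod.val_lt _))
    have hval : (i + 1).val = (i.val + 1) % L.length := by
      rw [ZMod.val_add, ZMod.val_one]
    by_cases hlt : i.val + 1 < L.length
    · have hv2 : (i + 1).val = i.val + 1 := by rw [hval, Nat.mod_eq_of_lt hlt]
      rw [List.Chain', List.isChain_iff_getElem] at hch
      have h5 := hch i.val (by omega)
      convert h5 using 2
    · have hi : i.val = L.length - 1 := by have := ZMod.val_lt i; omega
      have h0 : (i + 1).val = 0 := by
        rw [hval, hi]; simp [Nat.sub_add_cancel (by omega : 1 ≤ L.length)]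
      have e1 : L[i.val]'(ZMod.val_lt i) = y := by
        rw [hy, List.getLast_eq_getElem]
        congr 1
      have e2 : L[(i + 1).val]'(ZMod.val_lt _) = x := by
        rw [hx, List.head_eq_getElem]
        congr 1
      rw [e1, e2]
      exact hadj

end Aux

section Main

set_option linter.unusedSectionVars false

/-- Two consecutive vertices of a longest cycle cannot both have neighbours in `H`. -/
private lemma consec {G : SimpleGraph V} {n : ℕ} {c : ZMod n → V}
    (hc : IsLongestCycle G n c) {H : Set V} (hH : IsCompOff G (Set.range c) H)
    (j : ZMod n)
    (ha : ∃ x ∈ H, G.Adj (c j) x) (hb : ∃ x ∈ H, G.Adj (c (j + 1)) x) : False := by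
  obtain ⟨u, hu, hadju⟩ := ha
  obtain ⟨w, hw, hadjw⟩ := hb
  have hn3 : 3 ≤ n := hc.1.1
  haveI : NeZero n := ⟨by omega⟩
  obtain ⟨Q, hQne, hQnd, hQch, hQh, hQl, hQmem⟩ := pathList G hH.2.2.1 hu hw
  set A : List V := rmap (fun k => c (j + 1 + (k : ZMod n))) n with hA
  set L : List V := A ++ Q with hL
  have hAne : A ≠ [] := rmap_ne_nil (by omega)
  have hlen : L.length = n + Q.length := by
    rw [hL, List.length_append, rmap_length]
  have hQpos : 0 < Q.length := List.length_pos_iff.mpr hQne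
  -- last element of A is c j
  have hAlast : A.getLast? = some (c j) := by
    rw [rmap_getLast? (by omega : 0 < n)]
    congr 1
    have : ((n - 1 : ℕ) : ZMod n) = -1 := by
      push_cast [Nat.cast_sub (by omega : 1 ≤ n)]
      simp
    rw [this]
    ring_nf
  have hAhead : A.head? = some (c (j + 1)) := by
    rw [rmap_head? (by omega : 0 < n)]
    congr 1
    simp
  have hbound := cycle_bound hc L (by omega) ?_ ?_
    (x := c (j + 1)) (y := w) ?_ ?_ hadjw.symm
  · omega
  · -- Nodup
    rw [hL, List.nodup_append]
    refine ⟨?_, hQnd, ?_⟩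
    · refine rmap_nodup ?_
      intro k l hk hl hkl
      have := hc.1.2.1 hkl
      have h2 : ((k : ℕ) : ZMod n) = ((l : ℕ) : ZMod n) := by
        have := add_left_cancel this
        exact this
      have := congrArg ZMod.val h2
      rwa [ZMod.val_cast_of_lt hk, ZMod.val_cast_of_lt hl] at this
    · intro a haA b haQ hab
      subst hab
      have : a ∈ Set.range c := by
        obtain ⟨k, _, rfl⟩ := mem_rmap.mp haA
        exact ⟨_, rfl⟩
      exact Set.disjoint_left.mp hH.2.1 (hQmem a haQ) this
  · -- Chain'
    rw [hL, List.Chain', List.isChain_append]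
    refine ⟨?_, hQch, ?_⟩
    · refine rmap_chain' ?_
      intro k hk
      have := hc.1.2.2 (j + 1 + (k : ZMod n))
      convert this using 2
      push_cast
      ring
    · intro a haA b hbQ
      rw [hAlast] at haA
      rw [hQh] at hbQ
      simp only [Option.mem_def, Option.some.injEq] at haA hbQ
      subst haA; subst hbQ
      exact hadju
  · rw [hL, List.head?_append, rmap_head? (by omega : 0 < n)]
    simp
  · rw [hL, List.getLast?_append_of_ne_nil _ hQne]
    exact hQl

end Main

private lemma noCPath {G : SimpleGraph V} {n : ℕ} {c : ZMod n → V}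
    (hc : IsLongestCycle G n c) {H : Set V} (hH : IsCompOff G (Set.range c) H)
    {i1 i2 : ZMod n} (hne : c i1 ≠ c i2)
    (h1 : ∃ x ∈ H, G.Adj (c i1) x) (h2 : ∃ x ∈ H, G.Adj (c i2) x) :
    ¬ ∃ (m : ℕ) (p : ℕ → V), IsCPath G (Set.range c) m p ∧
        p 0 = c (i1 - 1) ∧ p (m - 1) = c (i2 - 1) := by
  rintro ⟨m, p, ⟨hm2, ⟨hpinj, hpadj⟩, -, -, hint⟩, hp0, hpm⟩
  obtain ⟨x1, hx1, hadj1⟩ := h1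
  obtain ⟨x2, hx2, hadj2⟩ := h2
  have hn3 : 3 ≤ n := hc.1.1
  haveI : NeZero n := ⟨by omega⟩
  by_cases hB : 2 < m ∧ p 1 ∈ H
  · refine consec hc hH (i1 - 1) ⟨p 1, hB.2, ?_⟩ ⟨x1, hx1, ?_⟩
    · rw [← hp0]; exact hpadj 0 (by omega)
    · have e : i1 - 1 + 1 = i1 := by ring
      rw [e]; exact hadj1
  have hA : ∀ j, j ≤ m - 2 → 1 ≤ j → p j ∉ H := by
    intro j
    induction j with
    | zero => intro _ h; omega
    | succ k ih =>
      intro hj _ hmem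
      rcases Nat.eq_zero_or_pos k with rfl | hk
      · exact hB ⟨by omega, hmem⟩
      · exact hH.2.2.2 (p (k + 1)) (p k) hmem (ih (by omega) hk)
          (hint k hk (by omega)) ((hpadj k (by omega)).symm)
  have hi12 : i1 ≠ i2 := fun h => hne (by rw [h])
  set a : ZMod n := i2 - i1 with ha
  have ha0 : a ≠ 0 := sub_ne_zero.mpr (Ne.symm hi12)
  set t1 : ℕ := a.val with ht1
  set t2 : ℕ := (-a).val with ht2
  have hcast1 : ((t1 : ℕ) : ZMod n) = a := (ZMod.natCast_val a).trans (ZMod.cast_id n a)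
  have hcast2 : ((t2 : ℕ) : ZMod n) = -a := (ZMod.natCast_val (-a)).trans (ZMod.cast_id n (-a))
  have ht1pos : 0 < t1 := by
    rcases Nat.eq_zero_or_pos t1 with h | h
    · exact absurd ((ZMod.val_eq_zero a).mp h) ha0
    · exact h
  have ht1lt : t1 < n := ZMod.val_lt a
  have ht2eq : t2 = n - t1 := by
    rw [ht2, ZMod.neg_val, if_neg ha0]
  have ht2pos : 0 < t2 := by omega
  have ht2lt : t2 < n := ZMod.val_lt (-a)
  have ht12 : t1 + t2 = n := by omega
  obtain ⟨Q, hQne, hQnd, hQch, hQh, hQl, hQmem⟩ := pathList G hH.2.2.1 hx2 hx1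
  have hQpos : 0 < Q.length := List.length_pos_iff.mpr hQne
  set A : List V := rmap (fun k => c (i1 + (k : ZMod n))) t1 with hAdef
  set P' : List V := rmap (fun k => p (m - 2 - k)) (m - 2) with hPdef
  set B : List V := rmap (fun k => c (i1 - 1 - (k : ZMod n))) t2 with hBdef
  set L : List V := A ++ (P' ++ (B ++ Q)) with hLdef
  have hlen : L.length = t1 + ((m - 2) + (t2 + Q.length)) := by
    simp [hLdef, hAdef, hPdef, hBdef, rmap_length]
  -- endpoints of the pieces
  have hAhead : A.head? = some (c i1) := by
    rw [hAdef, rmap_head? ht1pos]; congr 1; simp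
  have hAlast : A.getLast? = some (c (i2 - 1)) := by
    rw [hAdef, rmap_getLast? ht1pos]
    congr 2
    rw [Nat.cast_sub (by omega : 1 ≤ t1), hcast1]
    ring
  have hBhead : B.head? = some (c (i1 - 1)) := by
    rw [hBdef, rmap_head? ht2pos]; congr 1; simp
  have hBlast : B.getLast? = some (c i2) := by
    rw [hBdef, rmap_getLast? ht2pos]
    congr 2
    rw [Nat.cast_sub (by omega : 1 ≤ t2), hcast2]
    ring
  -- head of the middle part
  have hMhead : (P' ++ (B ++ Q)).head? = some (p (m - 2)) := by
    rcases Nat.lt_or_ge 2 m with hm3 | hm2'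
    · rw [List.head?_append, hPdef, rmap_head? (by omega : 0 < m - 2)]
      simp
    · have hm : m = 2 := by omega
      have : P' = [] := by
        rw [hPdef, hm]
        rfl
      rw [this, List.nil_append, List.head?_append, hBhead]
      have : p (m - 2) = c (i1 - 1) := by rw [hm]; simpa using hp0
      simp [this]
  -- membership facts
  have hmA : ∀ v ∈ A, v ∈ Set.range c := by
    intro v hv; obtain ⟨k, _, rfl⟩ := mem_rmap.mp hv; exact ⟨_, rfl⟩
  have hmB : ∀ v ∈ B, v ∈ Set.range c := by
    intro v hv; obtain ⟨k, _, rfl⟩ := mem_rmap.mp hv; exact ⟨_, rfl⟩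
  have hmP : ∀ v ∈ P', v ∉ Set.range c ∧ v ∉ H := by
    intro v hv
    obtain ⟨k, hk, rfl⟩ := mem_rmap.mp hv
    constructor
    · exact hint (m - 2 - k) (by omega) (by omega)
    · exact hA (m - 2 - k) (by omega) (by omega)
  -- nodup of pieces
  have hAnd : A.Nodup := by
    refine rmap_nodup ?_
    intro k l hk hl hkl
    have h2 := add_left_cancel (hc.1.2.1 hkl)
    have := congrArg ZMod.val h2
    rwa [ZMod.val_cast_of_lt (by omega), ZMod.val_cast_of_lt (by omega)] at this
  have hBnd : B.Nodup := by
    refine rmap_nodup ?_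
    intro k l hk hl hkl
    have h2 := hc.1.2.1 hkl
    have h3 : ((k : ℕ) : ZMod n) = ((l : ℕ) : ZMod n) := by
      linear_combination -h2
    have := congrArg ZMod.val h3
    rwa [ZMod.val_cast_of_lt (by omega), ZMod.val_cast_of_lt (by omega)] at this
  have hPnd : P'.Nodup := by
    refine rmap_nodup ?_
    intro k l hk hl hkl
    have := hpinj (m - 2 - k) (m - 2 - l) (by omega) (by omega) hkl
    omega
  have hABdisj : ∀ v ∈ A, v ∉ B := by
    intro v hvA hvB
    obtain ⟨k, hk, rfl⟩ := mem_rmap.mp hvA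
    obtain ⟨l, hl, hkl⟩ := mem_rmap.mp hvB
    have h2 := hc.1.2.1 hkl.symm
    have h3 : ((k + l + 1 : ℕ) : ZMod n) = 0 := by
      push_cast
      linear_combination h2
    rw [ZMod.natCast_eq_zero_iff] at h3
    have := Nat.le_of_dvd (by omega) h3
    omega
  have hbound := cycle_bound hc L (by omega) ?_ ?_
    (x := c i1) (y := x1) ?_ ?_ hadj1.symm
  · omega
  · -- Nodup
    rw [hLdef, List.nodup_append, List.nodup_append, List.nodup_append]
    refine ⟨hAnd, ⟨hPnd, ⟨hBnd, hQnd, ?_⟩, ?_⟩, ?_⟩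
    · intro v hvB w hvQ hvw
      subst hvw
      exact Set.disjoint_left.mp hH.2.1 (hQmem v hvQ) (hmB v hvB)
    · intro v hvP w hv hvw
      subst hvw
      rcases List.mem_append.mp hv with hv | hv
      · exact (hmP v hvP).1 (hmB v hv)
      · exact (hmP v hvP).2 (hQmem v hv)
    · intro v hvA w hv hvw
      subst hvw
      rcases List.mem_append.mp hv with hv | hv
      · exact (hmP v hv).1 (hmA v hvA)
      rcases List.mem_append.mp hv with hv | hv
      · exact hABdisj v hvA hv
      · exact Set.disjoint_left.mp hH.2.1 (hQmem v hv) (hmA v hvA)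
  · -- Chain'
    rw [hLdef, List.Chain', List.isChain_append, List.isChain_append, List.isChain_append]
    refine ⟨?_, ⟨?_, ⟨?_, hQch, ?_⟩, ?_⟩, ?_⟩
    · -- A
      refine rmap_chain' ?_
      intro k hk
      convert hc.1.2.2 (i1 + (k : ZMod n)) using 2
      push_cast
      ring
    · -- P'
      refine rmap_chain' ?_
      intro k hk
      have e : m - 2 - (k + 1) + 1 = m - 2 - k := by omega
      rw [← e]
      exact (hpadj _ (by omega)).symm
    · -- B
      refine rmap_chain' ?_
      intro k hk
      have h5 := (hc.1.2.2 (i1 - 1 - ((k + 1 : ℕ) : ZMod n))).symm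
      convert h5 using 2
      push_cast
      ring
    · -- junction B → Q
      intro x hx y hy
      rw [hBlast] at hx
      rw [hQh] at hy
      simp only [Option.mem_def, Option.some.injEq] at hx hy
      subst hx; subst hy
      exact hadj2
    · -- junction P' → (B ++ Q)
      intro x hx y hy
      rcases Nat.eq_zero_or_pos (m - 2) with hm0 | hm3
      · rw [hPdef, hm0] at hx
        simp [rmap] at hx
      · rw [hPdef, rmap_getLast? hm3] at hx
        rw [List.head?_append, hBhead] at hy
        rw [Option.some_or] at hy
        simp only [Option.mem_def, Option.some.injEq] at hx hy
        subst hx; subst hy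
        have e : m - 2 - (m - 2 - 1) = 1 := by omega
        rw [e, ← hp0]
        exact (hpadj 0 (by omega)).symm
    · -- junction A → middle
      intro x hx y hy
      rw [hAlast] at hx
      rw [hMhead] at hy
      simp only [Option.mem_def, Option.some.injEq] at hx hy
      subst hx; subst hy
      rw [← hpm]
      have e : m - 2 + 1 = m - 1 := by omega
      rw [← e]
      exact (hpadj (m - 2) (by omega)).symm
  · rw [hLdef, List.head?_append, hAhead]
    simp
  · rw [hLdef, List.getLast?_append_of_ne_nil _ (by simp [hQne]),
      List.getLast?_append_of_ne_nil _ (by simp [hQne]),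
      List.getLast?_append_of_ne_nil _ hQne]
    exact hQl

private lemma noAdjPred {G : SimpleGraph V} {n : ℕ} {c : ZMod n → V}
    (hc : IsLongestCycle G n c) {H : Set V} (hH : IsCompOff G (Set.range c) H)
    {i1 i2 : ZMod n} (hne : c i1 ≠ c i2)
    (h1 : ∃ x ∈ H, G.Adj (c i1) x) (h2 : ∃ x ∈ H, G.Adj (c i2) x) :
    ¬ G.Adj (c (i1 - 1)) (c (i2 - 1)) := by
  intro hadj
  apply noCPath hc hH hne h1 h2
  refine ⟨2, fun k => if k = 0 then c (i1 - 1) else c (i2 - 1),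
    ⟨le_refl 2, ⟨?_, ?_⟩, ?_, ?_, ?_⟩, ?_, ?_⟩
  · intro i j hi hj hij
    interval_cases i <;> interval_cases j <;> simp at hij ⊢
    · exact (G.ne_of_adj hadj) hij
    · exact (G.ne_of_adj hadj) hij.symm
  · intro i hi
    have : i = 0 := by omega
    subst this
    simpa using hadj
  · simpa using ⟨_, rfl⟩
  · simpa using ⟨_, rfl⟩
  · intro i h0 h1'
    omega
  · simp
  · simp

theorem stmt_2 (G : SimpleGraph V) (n : ℕ) (c : ZMod n → V)
    (hc : IsLongestCycle G n c)
    (H : Set V) (hH : IsCompOff G (Set.range c) H)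
    (i1 i2 : ZMod n) (hne : c i1 ≠ c i2)
    (h1 : ∃ x ∈ H, G.Adj (c i1) x) (h2 : ∃ x ∈ H, G.Adj (c i2) x) :
    (¬ ∃ (m : ℕ) (p : ℕ → V), IsCPath G (Set.range c) m p ∧
        p 0 = c (i1 - 1) ∧ p (m - 1) = c (i2 - 1)) ∧
    ¬ G.Adj (c (i1 - 1)) (c (i2 - 1)) ∧
    ¬ G.Adj (c (i1 + 1)) (c (i2 + 1)) := by
  refine ⟨noCPath hc hH hne h1 h2, noAdjPred hc hH hne h1 h2, ?_⟩
  set d : ZMod n → V := fun j => c (-j) with hd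
  have hdc : IsLongestCycle G n d := by
    refine ⟨⟨hc.1.1, fun u v h => neg_injective (hc.1.2.1 h), ?_⟩, hc.2⟩
    intro j
    have h5 := (hc.1.2.2 (-(j + 1))).symm
    show G.Adj (c (-j)) (c (-(j + 1)))
    convert h5 using 2
    ring
  have hrange : Set.range d = Set.range c := by
    ext v
    constructor
    · rintro ⟨j, rfl⟩; exact ⟨-j, rfl⟩
    · rintro ⟨j, rfl⟩; exact ⟨-j, by simp [hd]⟩
  have hH' : IsCompOff G (Set.range d) H := by rw [hrange]; exact hH
  have hne' : d (-i1) ≠ d (-i2) := by simpa [hd] using hne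
  have h1' : ∃ x ∈ H, G.Adj (d (-i1)) x := by simpa [hd] using h1
  have h2' : ∃ x ∈ H, G.Adj (d (-i2)) x := by simpa [hd] using h2
  have h := noAdjPred hdc hH' hne' h1' h2'
  have e1 : d (-i1 - 1) = c (i1 + 1) := by simp only [hd]; congr 1; ring
  have e2 : d (-i2 - 1) = c (i2 + 1) := by simp only [hd]; congr 1; ring
  rw [← e1, ← e2]
  exact h
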